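/- In the polynomial ring B = A[t] (char K ≠ 2), with d_2(t) as above and d_3(t) the 6×2 matrix with rows (b+t, 2a), (−2c, −b+t), (−v_1, −u_1), (v_2, u_2), (v_3, u_3), (−v_4, −u_4), the matrix product d_2(t) · d_3(t) is the zero 5×2 matrix. -/

import Mathlib

noncomputable section
open MvPolynomial Matrix

/-- The polynomial ring in 17 variables. -/
abbrev PB (K : Type*) [Field K] := MvPolynomial (Fin 17) K

variable {K : Type*} [Field K]

def x12 : PB K := X 0
def x13 : PB K := X 1
def x14 : PB K := X 2
def x23 : PB K := X 3
def x24 : PB K := X 4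
def x34 : PB K := X 5
def y12 : PB K := X 6
def y13 : PB K := X 7
def y14 : PB K := X 8
def y23 : PB K := X 9
def y24 : PB K := X 10
def y34 : PB K := X 11
def z123 : PB K := X 12
def z124 : PB K := X 13
def z134 : PB K := X 14
def z234 : PB K := X 15
def tv : PB K := X 16

/-- `Dl xij yij xkl ykl` is the 2x2 minor Delta(ij,kl) = x_ij*y_kl - x_kl*y_ij. -/
def Dl (p q r s : PB K) : PB K := p * s - r * q

def del1 : PB K := Dl x12 y12 x34 y34
def del2 : PB K := Dl x13 y13 x24 y24
def del3 : PB K := Dl x14 y14 x23 y23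

/-- The cubic u_{1,2,3}. -/
def u123 : PB K :=
  -2*z234 * Dl x12 y12 x13 y13 + 2*z134 * Dl x12 y12 x23 y23
    - 2*z124 * Dl x13 y13 x23 y23 + z123 * (del2 - del1 + del3)

/-- The cubic u_{1,2,4}. -/
def u124 : PB K :=
  2*z234 * Dl x12 y12 x14 y14 - 2*z134 * Dl x12 y12 x24 y24
    + z124 * (del1 + del2 + del3) - 2*z123 * Dl x14 y14 x24 y24

/-- The cubic u_{1,3,4}. -/
def u134 : PB K :=
  2*z234 * Dl x13 y13 x14 y14 + z134 * (-del1 - del2 + del3)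
    + 2*z124 * Dl x13 y13 x34 y34 - 2*z123 * Dl x14 y14 x34 y34

/-- The cubic u_{2,3,4}. -/
def u234 : PB K :=
  z234 * (-del1 - del2 - del3) - 2*z134 * Dl x23 y23 x24 y24
    + 2*z124 * Dl x23 y23 x34 y34 - 2*z123 * Dl x24 y24 x34 y34

def pa : PB K := x12*x34 - x13*x24 + x14*x23
def pb : PB K := x12*y34 - x13*y24 + x14*y23 + x34*y12 - x24*y13 + x23*y14
def pc : PB K := y12*y34 - y13*y24 + y14*y23

/-- The quartic u = b^2 - 4ac. -/
def uQ : PB K := pb^2 - 4*pa*pc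

/-- u_1 = sum over i # 1 of (-1)^i x_{i,1} z_hat-i (skew convention x_{i,j} = -x_{j,i}). -/
def u1 : PB K := -x12*z134 + x13*z124 - x14*z123
def u2 : PB K := -x12*z234 + x23*z124 - x24*z123
def u3 : PB K := -x13*z234 + x23*z134 - x34*z123
def u4 : PB K := -x14*z234 + x24*z134 - x34*z124
def v1 : PB K := -y12*z134 + y13*z124 - y14*z123
def v2 : PB K := -y12*z234 + y23*z124 - y24*z123
def v3 : PB K := -y13*z234 + y23*z134 - y34*z123
def v4 : PB K := -y14*z234 + y24*z134 - y34*z124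
/-- The 5x6 matrix d2(t). -/
def d2t : Matrix (Fin 5) (Fin 6) (PB K) := Matrix.of ![
    ![v1, u1, -del1 + del2 - del3 + tv, 2 * Dl x13 y13 x14 y14, -2 * Dl x12 y12 x14 y14, -2 * Dl x12 y12 x13 y13],
    ![-v2, -u2, -2 * Dl x23 y23 x24 y24, -del1 - del2 + del3 + tv, 2 * Dl x12 y12 x24 y24, 2 * Dl x12 y12 x23 y23],
    ![v3, u3, 2 * Dl x23 y23 x34 y34, 2 * Dl x13 y13 x34 y34, -del1 - del2 - del3 - tv, -2 * Dl x13 y13 x23 y23],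
    ![v4, u4, 2 * Dl x24 y24 x34 y34, 2 * Dl x14 y14 x34 y34, -2 * Dl x14 y14 x24 y24, del1 - del2 - del3 + tv],
    ![0, 0, -z234, -z134, z124, z123]]

/-- The 6x2 matrix d3(t). -/
def d3t : Matrix (Fin 6) (Fin 2) (PB K) := Matrix.of ![
    ![pb + tv, 2*pa], ![-2*pc, -pb + tv], ![-v1, -u1], ![v2, u2], ![v3, u3], ![-v4, -u4]]

set_option maxHeartbeats 1000000 in
lemma ent00 : ((v1) * (pb + tv) + (u1) * (-2*pc) + (-del1 + del2 - del3 + tv) * (-v1) + (2 * Dl x13 y13 x14 y14) * (v2) + (-2 * Dl x12 y12 x14 y14) * (v3) + (-2 * Dl x12 y12 x13 y13) * (-v4) : PB K) = 0 := by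
  simp only [u1,u2,u3,u4,v1,v2,v3,v4,del1,del2,del3,pa,pb,pc,Dl,tv]
  ring

set_option maxHeartbeats 1000000 in
lemma ent01 : ((v1) * (2*pa) + (u1) * (-pb + tv) + (-del1 + del2 - del3 + tv) * (-u1) + (2 * Dl x13 y13 x14 y14) * (u2) + (-2 * Dl x12 y12 x14 y14) * (u3) + (-2 * Dl x12 y12 x13 y13) * (-u4) : PB K) = 0 := by
  simp only [u1,u2,u3,u4,v1,v2,v3,v4,del1,del2,del3,pa,pb,pc,Dl,tv]
  ring

set_option maxHeartbeats 1000000 in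
lemma ent10 : ((-v2) * (pb + tv) + (-u2) * (-2*pc) + (-2 * Dl x23 y23 x24 y24) * (-v1) + (-del1 - del2 + del3 + tv) * (v2) + (2 * Dl x12 y12 x24 y24) * (v3) + (2 * Dl x12 y12 x23 y23) * (-v4) : PB K) = 0 := by
  simp only [u1,u2,u3,u4,v1,v2,v3,v4,del1,del2,del3,pa,pb,pc,Dl,tv]
  ring

set_option maxHeartbeats 1000000 in
lemma ent11 : ((-v2) * (2*pa) + (-u2) * (-pb + tv) + (-2 * Dl x23 y23 x24 y24) * (-u1) + (-del1 - del2 + del3 + tv) * (u2) + (2 * Dl x12 y12 x24 y24) * (u3) + (2 * Dl x12 y12 x23 y23) * (-u4) : PB K) = 0 := by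
  simp only [u1,u2,u3,u4,v1,v2,v3,v4,del1,del2,del3,pa,pb,pc,Dl,tv]
  ring

set_option maxHeartbeats 1000000 in
lemma ent20 : ((v3) * (pb + tv) + (u3) * (-2*pc) + (2 * Dl x23 y23 x34 y34) * (-v1) + (2 * Dl x13 y13 x34 y34) * (v2) + (-del1 - del2 - del3 - tv) * (v3) + (-2 * Dl x13 y13 x23 y23) * (-v4) : PB K) = 0 := by
  simp only [u1,u2,u3,u4,v1,v2,v3,v4,del1,del2,del3,pa,pb,pc,Dl,tv]
  ring

set_option maxHeartbeats 1000000 in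
lemma ent21 : ((v3) * (2*pa) + (u3) * (-pb + tv) + (2 * Dl x23 y23 x34 y34) * (-u1) + (2 * Dl x13 y13 x34 y34) * (u2) + (-del1 - del2 - del3 - tv) * (u3) + (-2 * Dl x13 y13 x23 y23) * (-u4) : PB K) = 0 := by
  simp only [u1,u2,u3,u4,v1,v2,v3,v4,del1,del2,del3,pa,pb,pc,Dl,tv]
  ring

set_option maxHeartbeats 1000000 in
lemma ent30 : ((v4) * (pb + tv) + (u4) * (-2*pc) + (2 * Dl x24 y24 x34 y34) * (-v1) + (2 * Dl x14 y14 x34 y34) * (v2) + (-2 * Dl x14 y14 x24 y24) * (v3) + (del1 - del2 - del3 + tv) * (-v4) : PB K) = 0 := by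
  simp only [u1,u2,u3,u4,v1,v2,v3,v4,del1,del2,del3,pa,pb,pc,Dl,tv]
  ring

set_option maxHeartbeats 1000000 in
lemma ent31 : ((v4) * (2*pa) + (u4) * (-pb + tv) + (2 * Dl x24 y24 x34 y34) * (-u1) + (2 * Dl x14 y14 x34 y34) * (u2) + (-2 * Dl x14 y14 x24 y24) * (u3) + (del1 - del2 - del3 + tv) * (-u4) : PB K) = 0 := by
  simp only [u1,u2,u3,u4,v1,v2,v3,v4,del1,del2,del3,pa,pb,pc,Dl,tv]
  ring

set_option maxHeartbeats 1000000 in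
lemma ent40 : ((0) * (pb + tv) + (0) * (-2*pc) + (-z234) * (-v1) + (-z134) * (v2) + (z124) * (v3) + (z123) * (-v4) : PB K) = 0 := by
  simp only [u1,u2,u3,u4,v1,v2,v3,v4,del1,del2,del3,pa,pb,pc,Dl,tv]
  ring

set_option maxHeartbeats 1000000 in
lemma ent41 : ((0) * (2*pa) + (0) * (-pb + tv) + (-z234) * (-u1) + (-z134) * (u2) + (z124) * (u3) + (z123) * (-u4) : PB K) = 0 := by
  simp only [u1,u2,u3,u4,v1,v2,v3,v4,del1,del2,del3,pa,pb,pc,Dl,tv]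
  ring

set_option maxHeartbeats 1000000 in
/-- d2(t) * d3(t) = 0. -/
theorem d2t_mul_d3t (hchar : ringChar K ≠ 2) :
    d2t * d3t = (0 : Matrix (Fin 5) (Fin 2) (PB K)) := by
  apply Matrix.ext
  intro i j
  show ∑ k, d2t i k * d3t k j = (0 : Matrix (Fin 5) (Fin 2) (PB K)) i j
  rw [Matrix.zero_apply, Fin.sum_univ_six]
  fin_cases i <;> fin_cases j <;>
    simp only [d2t, d3t, Matrix.of_apply, Matrix.cons_val', Matrix.cons_val_zero, Matrix.cons_val_one, Matrix.head_cons, Matrix.head_fin_const, Matrix.cons_val_fin_one, Matrix.empty_val', Matrix.cons_val_succ]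
  exacts [ent00, ent01, ent10, ent11, ent20, ent21, ent30, ent31, ent40, ent41]
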